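/- arXiv:1502.06982 — 3 statements merged into one kernel-verified Lean document; each statement's English description precedes it below -/
import Mathlib

section
/- The intersection of any family of (r,α)-admissible partitions of V is itself (r,α)-admissible. Consequently there exists a finest (r,α)-admissible partition of V, namely the intersection of all (r,α)-admissible partitions (called the cumulatively merged partition). -/
open scoped ENNReal NNReal
open MeasureTheory

namespace CMPPaper

variable {V : Type*}

/-- Graph distance between two subsets of vertices, valued in `ℝ≥0∞`
(`⊤` when one of the sets is empty). -/
noncomputable def setDist (G : SimpleGraph V) (A B : Set V) : ℝ≥0∞ :=
  ⨅ (x : A) (y : B), (G.dist x.1 y.1 : ℝ≥0∞)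

/-- Total weight `r(A) = Σ_{x ∈ A} r(x) ∈ [0,∞]` of a set of vertices. -/
noncomputable def wt (r : V → ℝ≥0) (A : Set V) : ℝ≥0∞ :=
  ∑' x : A, (r x.1 : ℝ≥0∞)

/-- A partition (encoded as a setoid) of the vertex set is `(r,α)`-admissible if any two
distinct clusters `C ≠ C'` satisfy `d(C,C') > min(r(C), r(C'))^α`. -/
def Admissible (G : SimpleGraph V) (r : V → ℝ≥0) (α : ℝ) (s : Setoid V) : Prop :=
  ∀ C ∈ s.classes, ∀ C' ∈ s.classes, C ≠ C' →
    (min (wt r C) (wt r C')) ^ α < setDist G C C'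

/-- The cumulatively merged partition: the finest `(r,α)`-admissible partition, i.e. the
intersection (infimum as setoids) of all `(r,α)`-admissible partitions. -/
noncomputable def CMP (G : SimpleGraph V) (r : V → ℝ≥0) (α : ℝ) : Setoid V :=
  sInf {s : Setoid V | Admissible G r α s}

/-- The cluster of the CMP containing `x`. -/
def cluster (G : SimpleGraph V) (r : V → ℝ≥0) (α : ℝ) (x : V) : Set V :=
  {y | (CMP G r α) x y}

/-- The ball `B(A, l) = {z : d(z,A) ≤ l}` around a set of vertices. -/
def ballSet (G : SimpleGraph V) (A : Set V) (l : ℝ≥0∞) : Set V :=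
  {z | ∃ a ∈ A, (G.dist z a : ℝ≥0∞) ≤ l}

/-- A subset `H` of the vertices is stable if every cluster `C` of the CMP of the induced
subgraph on `H` (with the restricted weights) satisfies `B(C, r(C)^α) ⊆ H`. -/
def IsStable (G : SimpleGraph V) (r : V → ℝ≥0) (α : ℝ) (H : Set V) : Prop :=
  ∀ C ∈ (CMP (G.induce H) (fun x : H => r x) α).classes,
    ballSet G (Subtype.val '' C) ((wt (fun x : H => r x) C) ^ α) ⊆ H

/-- The stabiliser of `W`: the smallest stable set containing `W`, i.e. the intersection of
all stable sets containing `W`. -/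
def stabiliser (G : SimpleGraph V) (r : V → ℝ≥0) (α : ℝ) (W : Set V) : Set V :=
  ⋂₀ {H : Set V | IsStable G r α H ∧ W ⊆ H}


lemma wt_mono (r : V → ℝ≥0) {A B : Set V} (h : A ⊆ B) : wt r A ≤ wt r B :=
  Summable.tsum_le_tsum_of_inj (Set.inclusion h) (Set.inclusion_injective h)
    (fun _ _ => zero_le) (fun _ => le_rfl) ENNReal.summable ENNReal.summable

lemma setDist_anti (G : SimpleGraph V) {A B A' B' : Set V} (hA : A ⊆ A') (hB : B ⊆ B') :
    setDist G A' B' ≤ setDist G A B := by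
  unfold setDist
  refine le_iInf fun x => le_iInf fun y => ?_
  exact iInf₂_le_of_le ⟨x.1, hA x.2⟩ ⟨y.1, hB y.2⟩ le_rfl

lemma iInf_admissible (G : SimpleGraph V) (r : V → ℝ≥0) {α : ℝ} (hα0 : 0 ≤ α)
    (ι : Type*) (f : ι → Setoid V) (hf : ∀ i, Admissible G r α (f i)) :
    Admissible G r α (⨅ i, f i) := by
  rintro C ⟨c, rfl⟩ C' ⟨c', rfl⟩ hne
  have hcc : ¬ (⨅ i, f i) c c' := by
    intro h
    apply hne
    ext x
    simp only [Set.mem_setOf_eq]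
    exact ⟨fun hx => (⨅ i, f i).trans hx h,
      fun hx => (⨅ i, f i).trans hx ((⨅ i, f i).symm h)⟩
  obtain ⟨i, hi⟩ : ∃ i, ¬ f i c c' := by
    by_contra hcon
    push_neg at hcon
    exact hcc (by rw [iInf, Setoid.sInf_iff]; rintro s ⟨j, rfl⟩; exact hcon j)
  have hle : (⨅ i, f i) ≤ f i := iInf_le f i
  have hCD : {x | (⨅ i, f i) x c} ⊆ {x | f i x c} := fun x hx => hle hx
  have hC'D' : {x | (⨅ i, f i) x c'} ⊆ {x | f i x c'} := fun x hx => hle hx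
  have hDne : ({x | f i x c} : Set V) ≠ {x | f i x c'} := by
    intro h
    apply hi
    have : c ∈ ({x | f i x c} : Set V) := (f i).refl' c
    rw [h] at this
    exact this
  calc (min (wt r {x | (⨅ i, f i) x c}) (wt r {x | (⨅ i, f i) x c'})) ^ α
      ≤ (min (wt r {x | f i x c}) (wt r {x | f i x c'})) ^ α :=
        ENNReal.rpow_le_rpow (min_le_min (wt_mono r hCD) (wt_mono r hC'D')) hα0
    _ < setDist G {x | f i x c} {x | f i x c'} :=
        hf i _ ((f i).mem_classes c) _ ((f i).mem_classes c') hDne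
    _ ≤ setDist G {x | (⨅ i, f i) x c} {x | (⨅ i, f i) x c'} :=
        setDist_anti G hCD hC'D'

open Classical in
/-- The merging operator `M_{x,y}`: if the clusters of `x` and `y` are distinct and
`d(x,y) ≤ min(r(𝒞_x), r(𝒞_y))^α`, merge them (take the smallest coarsening of `s`
relating `x` and `y`); otherwise leave the partition unchanged. -/
noncomputable def mergeOp (G : SimpleGraph V) (r : V → ℝ≥0) (α : ℝ) (x y : V)
    (s : Setoid V) : Setoid V :=
  if ¬ s x y ∧ (G.dist x y : ℝ≥0∞) ≤ (min (wt r {u | s x u}) (wt r {u | s y u})) ^ α then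
    sInf {t : Setoid V | s ≤ t ∧ t x y}
  else s

/-- The relation `C ↦ C'` (`C'` descends from `C`) on clusters of the CMP. -/
def Descends (G : SimpleGraph V) (r : V → ℝ≥0) (α : ℝ) (C C' : Set V) : Prop :=
  C ∈ (CMP G r α).classes ∧ C' ∈ (CMP G r α).classes ∧ C ≠ C' ∧
    setDist G C C' ≤ (wt r C) ^ α

/-- Integer part of an extended nonnegative real, valued in `ℕ∞`. -/
noncomputable def efloor (x : ℝ≥0∞) : ℕ∞ :=
  if x = ⊤ then ⊤ else (⌊x.toReal⌋₊ : ℕ∞)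

/-- The bound `max(w log₂ w / 2, 0)` (for `α = 1`), resp. `w^α/(2^α-2)` (for `α ≠ 1`),
on the diameter of a cluster of total weight `w`. -/
noncomputable def diamBound (α : ℝ) (w : ℝ≥0∞) : ℝ≥0∞ :=
  if α = 1 then
    (if w = ⊤ then ⊤ else ENNReal.ofReal (max (w.toReal * Real.logb 2 w.toReal / 2) 0))
  else w ^ α / ((2 : ℝ≥0∞) ^ α - 2)

/-- The relation `C →η C'` on clusters of the CMP:  `d(C,C') ≤ η·r(C)^α`. -/
def EtaDesc (G : SimpleGraph V) (r : V → ℝ≥0) (α η : ℝ) (C C' : Set V) : Prop :=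
  C ∈ (CMP G r α).classes ∧ C' ∈ (CMP G r α).classes ∧ C ≠ C' ∧
    setDist G C C' ≤ ENNReal.ofReal η * (wt r C) ^ α

/-- The `η`-stabiliser of a vertex `x`: the union of `𝒞_x` together with all clusters
reachable from `𝒞_x` by a finite oriented path for the relation `→η`. -/
def etaStab (G : SimpleGraph V) (r : V → ℝ≥0) (α η : ℝ) (x : V) : Set V :=
  ⋃₀ {C' | Relation.ReflTransGen (EtaDesc G r α η) (cluster G r α x) C'}

/-- The path graph on `ℕ`: `m` and `m+1` are adjacent. -/
def pathGraphN : SimpleGraph ℕ := SimpleGraph.fromRel (fun m n => n = m + 1)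

/-- The two-sided path graph on `ℤ`: `k` and `k+1` are adjacent. -/
def pathGraphZ : SimpleGraph ℤ := SimpleGraph.fromRel (fun a b => b = a + 1)

/-- The hypercubic lattice `ℤ^d`: `x` and `y` are adjacent iff `‖x-y‖₁ = 1`. -/
def latticeGraph (d : ℕ) : SimpleGraph (Fin d → ℤ) :=
  SimpleGraph.fromRel (fun x y => (∑ i, |x i - y i|) = 1)

/-- The CMP of the weighted graph `(G, r)` with expansion exponent `α` has an
infinite cluster. -/
def HasInfiniteCluster (G : SimpleGraph V) (r : V → ℝ≥0) (α : ℝ) : Prop :=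
  ∃ C ∈ (CMP G r α).classes, C.Infinite

/-- `w` is an i.i.d. family of Bernoulli(`p`) weights indexed by `V`, under the
probability measure `μ`. -/
def IsBernoulliField {Ω : Type*} [MeasurableSpace Ω] (μ : Measure Ω)
    (p : ℝ) (w : Ω → V → ℝ≥0) : Prop :=
  (∀ x : V, Measurable fun ω => w ω x) ∧
  (∀ ω x, w ω x = 0 ∨ w ω x = 1) ∧
  (∀ x : V, μ {ω | w ω x = 1} = ENNReal.ofReal p) ∧
  ProbabilityTheory.iIndepFun (fun x ω => w ω x) μ

/-- `w` is an i.i.d. family of weights indexed by `V`, each with law `ν`, under the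
probability measure `μ`. -/
def IsIIDField {Ω : Type*} [MeasurableSpace Ω] (μ : Measure Ω)
    (ν : Measure ℝ≥0) (w : Ω → V → ℝ≥0) : Prop :=
  (∀ x : V, Measurable fun ω => w ω x) ∧
  (∀ x : V, μ.map (fun ω => w ω x) = ν) ∧
  ProbabilityTheory.iIndepFun (fun x ω => w ω x) μ

/-- The intersection of any family of `(r,α)`-admissible partitions is `(r,α)`-admissible;
consequently the CMP (the intersection of all admissible partitions) is itself admissible
and is the finest admissible partition. -/
theorem intersection_admissible_and_finest
    {V : Type*} (G : SimpleGraph V) (hconn : G.Connected)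
    (hlf : ∀ v : V, (G.neighborSet v).Finite)
    (r : V → ℝ≥0) (α : ℝ) (hα : 1 ≤ α) :
    (∀ (ι : Type*) (f : ι → Setoid V), (∀ i, Admissible G r α (f i)) →
        Admissible G r α (⨅ i, f i)) ∧
    Admissible G r α (CMP G r α) ∧
    (∀ s : Setoid V, Admissible G r α s → CMP G r α ≤ s) := by
  have hα0 : (0:ℝ) ≤ α := le_trans zero_le_one hα
  refine ⟨fun ι f hf => iInf_admissible G r hα0 ι f hf, ?_, fun s hs => sInf_le hs⟩
  rw [CMP, sInf_eq_iInf']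
  exact iInf_admissible G r hα0 _ _ fun s => s.2


end CMPPaper
end

section
/- Let α ≥ 1 and define f : [0,∞) → [0,∞) by f(x) = max(x·log₂ x/2, 0) if α = 1 and f(x) = x^α/(2^α − 2) if α > 1. Then for all real numbers a, b ≥ 1, f(a+b) ≥ f(a) + f(b) + min(a,b)^α. -/
open scoped ENNReal NNReal
open MeasureTheory

namespace CMPPaper

variable {V : Type*}

lemma rpow_diff_mono (α : ℝ) (hα : 1 ≤ α) (a : ℝ) (ha : 0 ≤ a) :
    MonotoneOn (fun x : ℝ => (x + a) ^ α - x ^ α) (Set.Ici 0) := by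
  have hderiv : ∀ x : ℝ, HasDerivAt (fun x : ℝ => (x + a) ^ α - x ^ α)
      (α * (x + a) ^ (α - 1) - α * x ^ (α - 1)) x := by
    intro x
    have h1 : HasDerivAt (fun x : ℝ => (x + a) ^ α) (α * (x + a) ^ (α - 1) * 1) x :=
      (Real.hasDerivAt_rpow_const (Or.inr hα)).comp x ((hasDerivAt_id x).add_const a)
    have h2 : HasDerivAt (fun x : ℝ => x ^ α) (α * x ^ (α - 1)) x :=
      Real.hasDerivAt_rpow_const (Or.inr hα)
    exact (h1.sub h2).congr_deriv (by ring)
  apply monotoneOn_of_deriv_nonneg (convex_Ici 0)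
  · exact fun x _ => ((hderiv x).differentiableAt).continuousAt.continuousWithinAt
  · exact fun x _ => ((hderiv x).differentiableAt).differentiableWithinAt
  · intro x hx
    rw [interior_Ici] at hx
    rw [(hderiv x).deriv]
    have h3 : x ^ (α - 1) ≤ (x + a) ^ (α - 1) :=
      Real.rpow_le_rpow hx.le (by linarith) (by linarith)
    have hα0 : (0:ℝ) ≤ α := le_trans zero_le_one hα
    nlinarith

lemma two_rpow_le (s : ℝ) (h0 : 0 ≤ s) (h1 : s ≤ 1) : (2:ℝ) ^ s ≤ 1 + s := by
  have := convexOn_exp.2 (Set.mem_univ (0:ℝ)) (Set.mem_univ (Real.log 2))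
    (by linarith : (0:ℝ) ≤ 1 - s) h0 (by ring)
  rw [Real.rpow_def_of_pos (by norm_num : (0:ℝ) < 2)]
  simp only [smul_eq_mul, mul_zero, zero_add, Real.exp_zero, Real.exp_log (by norm_num : (0:ℝ) < 2)] at this
  calc Real.exp (Real.log 2 * s) = Real.exp (s * Real.log 2) := by rw [mul_comm]
    _ ≤ (1-s) * 1 + s * 2 := this
    _ = 1 + s := by ring

lemma logb_sum_ge (a b : ℝ) (ha : 0 < a) (hab : a ≤ b) :
    Real.logb 2 b + a / b ≤ Real.logb 2 (a + b) := by
  have hb : 0 < b := lt_of_lt_of_le ha hab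
  have hs0 : 0 ≤ a / b := by positivity
  have hs1 : a / b ≤ 1 := by rw [div_le_one hb]; exact hab
  have key : (2:ℝ) ^ (a / b) ≤ 1 + a / b := two_rpow_le _ hs0 hs1
  have h2 : (2:ℝ) ^ (Real.logb 2 b + a / b) ≤ a + b := by
    rw [Real.rpow_add (by norm_num : (0:ℝ) < 2), Real.rpow_logb (by norm_num) (by norm_num) hb]
    calc b * (2:ℝ) ^ (a/b) ≤ b * (1 + a/b) := by nlinarith [Real.rpow_pos_of_pos (show (0:ℝ)<2 by norm_num) (a/b)]
      _ = b + a := by field_simp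
      _ = a + b := by ring
  calc Real.logb 2 b + a / b = Real.logb 2 ((2:ℝ) ^ (Real.logb 2 b + a / b)) := by
        rw [Real.logb_rpow (by norm_num) (by norm_num)]
    _ ≤ Real.logb 2 (a + b) :=
        Real.logb_le_logb_of_le (by norm_num : (1:ℝ) < 2) (Real.rpow_pos_of_pos (by norm_num) _) h2

lemma aux_main (α : ℝ) (hα : 1 ≤ α) (a b : ℝ) (ha : 1 ≤ a) (hab : a ≤ b) :
    (if α = 1 then max (a * Real.logb 2 a / 2) 0 else a ^ α / (2 ^ α - 2))
    + (if α = 1 then max (b * Real.logb 2 b / 2) 0 else b ^ α / (2 ^ α - 2))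
    + a ^ α
    ≤ (if α = 1 then max ((a+b) * Real.logb 2 (a+b) / 2) 0 else (a+b) ^ α / (2 ^ α - 2)) := by
  have ha0 : (0:ℝ) < a := lt_of_lt_of_le zero_lt_one ha
  have hb1 : (1:ℝ) ≤ b := le_trans ha hab
  have hb0 : (0:ℝ) < b := lt_of_lt_of_le zero_lt_one hb1
  by_cases h1 : α = 1
  · subst h1
    simp only [eq_self_iff_true, if_true, Real.rpow_one]
    rw [max_eq_left, max_eq_left, max_eq_left]
    · have hA : 1 + Real.logb 2 a ≤ Real.logb 2 (a + b) := by
        have h2a : Real.logb 2 (2 * a) = 1 + Real.logb 2 a := by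
          rw [Real.logb_mul (by norm_num) (ne_of_gt ha0), Real.logb_self_eq_one (by norm_num : (1:ℝ) < 2)]
        rw [← h2a]
        exact Real.logb_le_logb_of_le (by norm_num) (by linarith) (by linarith)
      have hB : Real.logb 2 b + a / b ≤ Real.logb 2 (a + b) := logb_sum_ge a b ha0 hab
      have h3 : a * (1 + Real.logb 2 a) ≤ a * Real.logb 2 (a + b) :=
        mul_le_mul_of_nonneg_left hA ha0.le
      have h4 : b * (Real.logb 2 b + a / b) ≤ b * Real.logb 2 (a + b) :=
        mul_le_mul_of_nonneg_left hB hb0.le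
      have h5 : b * (a / b) = a := by field_simp
      nlinarith
    · have : 0 ≤ Real.logb 2 (a + b) := Real.logb_nonneg (by norm_num) (by linarith)
      positivity
    · have : 0 ≤ Real.logb 2 b := Real.logb_nonneg (by norm_num) hb1
      positivity
    · have : 0 ≤ Real.logb 2 a := Real.logb_nonneg (by norm_num) ha
      positivity
  · simp only [if_neg h1]
    have hα1 : 1 < α := lt_of_le_of_ne hα (Ne.symm h1)
    have h2 : (2:ℝ) < 2 ^ α := by
      calc (2:ℝ) = 2 ^ (1:ℝ) := (Real.rpow_one 2).symm
        _ < 2 ^ α := Real.rpow_lt_rpow_of_exponent_lt (by norm_num) hα1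
    have hd : (0:ℝ) < 2 ^ α - 2 := by linarith
    have hmono := rpow_diff_mono α hα a ha0.le (Set.mem_Ici.2 ha0.le)
      (Set.mem_Ici.2 (le_trans ha0.le hab)) hab
    simp only at hmono
    have h2a : (a + a) ^ α = 2 ^ α * a ^ α := by
      rw [show a + a = 2 * a by ring, Real.mul_rpow (by norm_num) ha0.le]
    rw [show b + a = a + b by ring, h2a] at hmono
    have key : a ^ α + b ^ α + a ^ α * (2 ^ α - 2) ≤ (a + b) ^ α := by nlinarith
    rw [← add_div, le_div_iff₀ hd]
    have expand : ((a ^ α + b ^ α) / (2 ^ α - 2) + a ^ α) * (2 ^ α - 2)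
        = a ^ α + b ^ α + a ^ α * (2 ^ α - 2) := by field_simp
    linarith [expand.le, expand.ge, key]

/-- The function `f(x) = max(x·log₂ x/2, 0)` (if `α = 1`), `f(x) = x^α/(2^α − 2)` (if `α > 1`)
satisfies the functional inequality `f(a+b) ≥ f(a) + f(b) + min(a,b)^α` for all `a, b ≥ 1`. -/
theorem fdiam_superadditive (α : ℝ) (hα : 1 ≤ α) (f : ℝ → ℝ)
    (hf : ∀ x : ℝ, f x = if α = 1 then max (x * Real.logb 2 x / 2) 0 else x ^ α / (2 ^ α - 2))
    (a b : ℝ) (ha : 1 ≤ a) (hb : 1 ≤ b) :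
    f a + f b + min a b ^ α ≤ f (a + b) := by
  rcases le_total a b with h | h
  · rw [hf, hf, hf, min_eq_left h]
    exact aux_main α hα a b ha h
  · rw [hf, hf, hf, min_eq_right h]
    have := aux_main α hα b a hb h
    rw [add_comm b a] at this
    linarith


end CMPPaper
end

section
/- In the oriented graph (𝒞, ↦) on the clusters of the cumulatively merged partition: (i) if C ↦ C' then ⌊r(C)^α⌋ > ⌊r(C')^α⌋, where ⌊·⌋ is the integer part; (ii) there is no infinite oriented path C₁ ↦ C₂ ↦ ⋯ (in particular there is no oriented cycle), and every oriented path starting from a cluster C with |C| < ∞ has length at most ⌊r(C)^α⌋. -/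
open scoped ENNReal NNReal
open MeasureTheory

namespace CMPPaper

variable {V : Type*}

lemma cmp_rel_iff (G : SimpleGraph V) (r : V → ℝ≥0) (α : ℝ) (x y : V) :
    CMP G r α x y ↔ ∀ s : Setoid V, Admissible G r α s → s x y := by
  constructor
  · intro h s hs; exact h s hs
  · intro h s hs; exact h s hs

lemma cmp_admissible (G : SimpleGraph V) (r : V → ℝ≥0) (α : ℝ) (hα : 0 ≤ α) :
    Admissible G r α (CMP G r α) := by
  rintro C ⟨x, rfl⟩ C' ⟨x', rfl⟩ hne
  have hxx' : ¬ CMP G r α x x' := by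
    intro h
    apply hne
    ext z
    simp only [Set.mem_setOf_eq]
    exact ⟨fun hz => (CMP G r α).trans hz h, fun hz => (CMP G r α).trans hz ((CMP G r α).symm h)⟩
  have : ¬ ∀ s : Setoid V, Admissible G r α s → s x x' := fun h => hxx' ((cmp_rel_iff G r α x x').2 h)
  push_neg at this
  obtain ⟨s, hs, hsx⟩ := this
  have hD : {z | s z x} ∈ s.classes := s.mem_classes x
  have hD' : {z | s z x'} ∈ s.classes := s.mem_classes x'
  have hDne : {z | s z x} ≠ {z | s z x'} := by
    intro h
    have hx : x ∈ {z | s z x} := s.refl x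
    rw [h] at hx
    exact hsx hx
  have key := hs _ hD _ hD' hDne
  have hsub : {z | CMP G r α z x} ⊆ {z | s z x} := fun z hz => hz s hs
  have hsub' : {z | CMP G r α z x'} ⊆ {z | s z x'} := fun z hz => hz s hs
  calc (min (wt r {z | CMP G r α z x}) (wt r {z | CMP G r α z x'})) ^ α
      ≤ (min (wt r {z | s z x}) (wt r {z | s z x'})) ^ α := by
        exact ENNReal.rpow_le_rpow (min_le_min (wt_mono r hsub) (wt_mono r hsub')) hα
    _ < setDist G {z | s z x} {z | s z x'} := key
    _ ≤ setDist G {z | CMP G r α z x} {z | CMP G r α z x'} := setDist_anti G hsub hsub'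

lemma descends_key (G : SimpleGraph V) (r : V → ℝ≥0) (α : ℝ) (hα : 0 ≤ α)
    {C C' : Set V} (h : Descends G r α C C') :
    ∃ N : ℕ, (wt r C') ^ α < N ∧ (N : ℝ≥0∞) ≤ (wt r C) ^ α := by
  obtain ⟨hC, hC', hne, hd⟩ := h
  obtain ⟨y, hy⟩ := hC
  obtain ⟨y', hy'⟩ := hC'
  have hyC : y ∈ C := by rw [hy]; exact (CMP G r α).refl y
  have hy'C' : y' ∈ C' := by rw [hy']; exact (CMP G r α).refl y'
  set S : Set ℕ := {n | ∃ a ∈ C, ∃ b ∈ C', G.dist a b = n} with hS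
  have hSne : S.Nonempty := ⟨G.dist y y', y, hyC, y', hy'C', rfl⟩
  set N := sInf S with hN
  have hNmem : N ∈ S := Nat.sInf_mem hSne
  have h1 : setDist G C C' ≤ (N : ℝ≥0∞) := by
    obtain ⟨a, ha, b, hb, hab⟩ := hNmem
    have step : setDist G C C' ≤ (G.dist a b : ℝ≥0∞) := by
      rw [setDist]
      refine iInf_le_of_le ⟨a, ha⟩ ?_
      exact iInf_le (fun y : C' => (G.dist a y.1 : ℝ≥0∞)) ⟨b, hb⟩
    rw [← hab]
    exact_mod_cast step
  have h2 : (N : ℝ≥0∞) ≤ setDist G C C' := by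
    rw [setDist]
    refine le_iInf fun a => le_iInf fun b => ?_
    have : N ≤ G.dist a.1 b.1 := Nat.sInf_le ⟨a.1, a.2, b.1, b.2, rfl⟩
    exact_mod_cast this
  have hEq : setDist G C C' = (N : ℝ≥0∞) := le_antisymm h1 h2
  have hadm := cmp_admissible G r α hα C (hy ▸ (CMP G r α).mem_classes y)
    C' (hy' ▸ (CMP G r α).mem_classes y') hne
  rw [hEq] at hadm hd
  rcases min_cases (wt r C) (wt r C') with ⟨hmin, _⟩ | ⟨hmin, _⟩
  · rw [hmin] at hadm
    exact absurd (hadm.trans_le hd) (lt_irrefl _)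
  · rw [hmin] at hadm
    exact ⟨N, hadm, hd⟩

lemma efloor_lt_nat {x : ℝ≥0∞} {N : ℕ} (h : x < N) : efloor x < (N : ℕ∞) := by
  have hx : x ≠ ⊤ := h.ne_top
  rw [efloor, if_neg hx]
  have : x.toReal < (N : ℝ) := by
    rw [← ENNReal.toReal_natCast N]
    exact (ENNReal.toReal_lt_toReal hx (ENNReal.natCast_ne_top N)).2 h
  exact_mod_cast (Nat.floor_lt ENNReal.toReal_nonneg).2 this

lemma nat_le_efloor {x : ℝ≥0∞} {N : ℕ} (h : (N : ℝ≥0∞) ≤ x) : (N : ℕ∞) ≤ efloor x := by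
  rw [efloor]
  split_ifs with hx
  · exact le_top
  · have : (N : ℝ) ≤ x.toReal := by
      rw [← ENNReal.toReal_natCast N]
      exact ENNReal.toReal_mono hx h
    exact_mod_cast Nat.le_floor this

lemma chain_bound (f : ℕ → ℕ∞) : ∀ n : ℕ, (∀ i < n, f (i + 1) < f i) → f n + n ≤ f 0 := by
  intro n
  induction n with
  | zero => simp
  | succ n ih =>
    intro h
    have h1 : f (n + 1) + 1 ≤ f n := Order.add_one_le_of_lt (h n (lt_add_one n))
    calc f (n + 1) + ((n : ℕ∞) + 1) = (f (n + 1) + 1) + n := by ring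
      _ ≤ f n + n := add_le_add_left h1 _
      _ ≤ f 0 := ih fun i hi => h i (hi.trans (lt_add_one n))

/-- Properties of the oriented graph `(𝒞, ↦)` on clusters of the CMP:
(i) if `C ↦ C'` then `⌊r(C)^α⌋ > ⌊r(C')^α⌋`;
(ii) there is no infinite oriented path; in particular there is no oriented cycle;
moreover every oriented path starting from a finite cluster `C` has length at most
`⌊r(C)^α⌋`. -/
theorem CMP_descends_properties
    {V : Type*} (G : SimpleGraph V) (hconn : G.Connected)
    (hlf : ∀ v : V, (G.neighborSet v).Finite)
    (r : V → ℝ≥0) (α : ℝ) (hα : 1 ≤ α) :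
    (∀ C C' : Set V, Descends G r α C C' →
        efloor ((wt r C') ^ α) < efloor ((wt r C) ^ α)) ∧
    (¬ ∃ c : ℕ → Set V, ∀ n, Descends G r α (c n) (c (n + 1))) ∧
    (∀ (n : ℕ) (c : ℕ → Set V), 0 < n →
        (∀ i < n, Descends G r α (c i) (c (i + 1))) → c 0 ≠ c n) ∧
    (∀ C : Set V, C ∈ (CMP G r α).classes → C.Finite →
        ∀ (n : ℕ) (c : ℕ → Set V), c 0 = C →
          (∀ i < n, Descends G r α (c i) (c (i + 1))) →
          (n : ℕ∞) ≤ efloor ((wt r C) ^ α)) := by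
  have hα0 : (0 : ℝ) ≤ α := zero_le_one.trans hα
  have step : ∀ C C' : Set V, Descends G r α C C' →
      efloor ((wt r C') ^ α) < efloor ((wt r C) ^ α) := by
    intro C C' h
    obtain ⟨N, h1, h2⟩ := descends_key G r α hα0 h
    exact lt_of_lt_of_le (efloor_lt_nat h1) (nat_le_efloor h2)
  refine ⟨step, ?_, ?_, ?_⟩
  · rintro ⟨c, hc⟩
    exact (RelEmbedding.natGT (fun n => efloor ((wt r (c n)) ^ α))
      (fun n => step _ _ (hc n))).not_wellFounded wellFounded_lt
  · intro n c hn hchain heq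
    obtain ⟨m, rfl⟩ : ∃ m, n = m + 1 := ⟨n - 1, by omega⟩
    have hb := chain_bound (fun i => efloor ((wt r (c i)) ^ α)) (m + 1)
      (fun i hi => step _ _ (hchain i hi))
    have hlt : efloor ((wt r (c (m + 1))) ^ α) < efloor ((wt r (c m)) ^ α) :=
      step _ _ (hchain m (lt_add_one m))
    have hne : efloor ((wt r (c (m + 1))) ^ α) ≠ ⊤ := ne_top_of_lt hlt
    have hb' : efloor ((wt r (c (m + 1))) ^ α) + ((m : ℕ∞) + 1) ≤
        efloor ((wt r (c 0)) ^ α) := by exact_mod_cast hb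
    rw [heq] at hb'
    have h1 : efloor ((wt r (c (m + 1))) ^ α) < efloor ((wt r (c (m + 1))) ^ α) + 1 :=
      (ENat.lt_add_one_iff hne).2 le_rfl
    have h2 : efloor ((wt r (c (m + 1))) ^ α) + 1 ≤
        efloor ((wt r (c (m + 1))) ^ α) + ((m : ℕ∞) + 1) :=
      add_le_add_right (le_add_self) _
    exact absurd ((h1.trans_le h2).trans_le hb') (lt_irrefl _)
  · intro C hC hCfin n c hc0 hchain
    have hb := chain_bound (fun i => efloor ((wt r (c i)) ^ α)) n
      (fun i hi => step _ _ (hchain i hi))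
    calc (n : ℕ∞) ≤ efloor ((wt r (c n)) ^ α) + n := le_add_self
      _ ≤ efloor ((wt r (c 0)) ^ α) := hb
      _ = efloor ((wt r C) ^ α) := by rw [hc0]


end CMPPaper
end
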